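/- For the diameter gadget (G,w) with α = n² and β = 2n², where n = |V|, and for any real ε ∈ (0, 1/2] with n ≥ 2/ε: every real number D̃ satisfying D_{G,w} ≤ D̃ ≤ (3/2 − ε)·D_{G,w} satisfies D̃ < 3n² if F(x,y)=1, and D̃ ≥ 3n² if F(x,y)=0. In particular such a D̃ determines the value of F(x,y). -/

import Mathlib

open scoped ENNReal

set_option linter.unusedVariables false

/-- The length of a walk with respect to `ℝ≥0∞` edge weights. -/
noncomputable def wlen {V : Type*} (G : SimpleGraph V) (w : V → V → ℝ≥0∞) {u v : V}
    (p : G.Walk u v) : ℝ≥0∞ :=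
  (p.darts.map fun d => w d.toProd.1 d.toProd.2).sum

/-- The weighted distance: the infimum of walk lengths. -/
noncomputable def wdist {V : Type*} (G : SimpleGraph V) (w : V → V → ℝ≥0∞) (u v : V) : ℝ≥0∞ :=
  ⨅ p : G.Walk u v, wlen G w p

/-- Weighted diameter `D_{G,w} = max_{u,v} d_{G,w}(u,v)`. -/
noncomputable def wdiam {V : Type*} (G : SimpleGraph V) (w : V → V → ℝ≥0∞) : ℝ≥0∞ :=
  ⨆ u, ⨆ v, wdist G w u v

/-- Vertices of the diameter gadget. -/
inductive GV (h s ℓ : ℕ) where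
  /-- tree node `t_{i,j}` encoded in heap order: `t m` is the tree node numbered `m+1`,
  i.e. the node of depth `i` and position `j` with `m + 1 = 2^i + (j-1)`. -/
  | t (m : Fin (2 ^ (h + 1) - 1))
  /-- path node `p_{i+1, j+1}` -/
  | p (i : Fin (2 * s + ℓ)) (j : Fin (2 ^ h))
  /-- node `a_{i+1}` -/
  | a (i : Fin (2 ^ s))
  /-- node `b_{i+1}` -/
  | b (i : Fin (2 ^ s))
  /-- node `a^z_{j+1}` -/
  | ah (z : Bool) (j : Fin s)
  /-- node `b^z_{j+1}` -/
  | bh (z : Bool) (j : Fin s)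
  /-- node `a*_{j+1}` -/
  | as (j : Fin ℓ)
  /-- node `b*_{j+1}` -/
  | bs (j : Fin ℓ)
  deriving DecidableEq, Fintype

/-- Base (oriented) adjacency of the diameter gadget.  Here `bin(i,j)` is realized as
`Nat.testBit` on the 0-based index. -/
def gadgetAdj0 {h s ℓ : ℕ} : GV h s ℓ → GV h s ℓ → Prop
  | .t m, .t m' => 1 ≤ m.val ∧ m'.val + 1 = (m.val + 1) / 2
  | .t m, .p _ j => m.val + 1 = 2 ^ h + j.val
  | .p i j, .p i' j' => i = i' ∧ j.val = j'.val + 1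
  | .ah z jj, .p i j => i.val = 2 * jj.val + (if z then 1 else 0) ∧ j.val = 0
  | .bh z jj, .p i j => i.val = 2 * jj.val + (if z then 0 else 1) ∧ j.val = 2 ^ h - 1
  | .as jj, .p i j => i.val = 2 * s + jj.val ∧ j.val = 0
  | .bs jj, .p i j => i.val = 2 * s + jj.val ∧ j.val = 2 ^ h - 1
  | .a i, .ah z j => z = i.val.testBit j.val
  | .b i, .bh z j => z = i.val.testBit j.val
  | .a i, .a i' => i ≠ i'
  | .b i, .b i' => i ≠ i'
  | .a _, .as _ => True
  | .b _, .bs _ => True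
  | _, _ => False

/-- The diameter gadget graph. -/
def gadget (h s ℓ : ℕ) : SimpleGraph (GV h s ℓ) where
  Adj u v := u ≠ v ∧ (gadgetAdj0 u v ∨ gadgetAdj0 v u)
  symm := ⟨fun u v huv => ⟨huv.1.symm, huv.2.symm⟩⟩
  loopless := ⟨fun u hu => hu.1 rfl⟩

/-- The weights of the diameter gadget: tree edges, path edges and the attachment edges of
`a^z_j, b^z_j, a*_j, b*_j` to the paths have weight `1`; leaf–path edges, `a_i`–`a^{bin(i,j)}_j`,
`b_i`–`b^{bin(i,j)}_j` edges and clique edges have weight `α`; `a_i`–`a*_j` has weight `α` if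
`x_{i,j}=1` and `β` otherwise, and similarly `b_i`–`b*_j` according to `y`. -/
def gadgetW {h s ℓ : ℕ} (x y : Fin (2 ^ s) → Fin ℓ → Bool) (α β : ℕ) :
    GV h s ℓ → GV h s ℓ → ℕ
  | .a i, .as j => if x i j then α else β
  | .as j, .a i => if x i j then α else β
  | .b i, .bs j => if y i j then α else β
  | .bs j, .b i => if y i j then α else β
  | .t _, .p _ _ => α
  | .p _ _, .t _ => α
  | .a _, .ah _ _ => α
  | .ah _ _, .a _ => α
  | .b _, .bh _ _ => α
  | .bh _ _, .b _ => α
  | .a _, .a _ => α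
  | .b _, .b _ => α
  | _, _ => 1



/-! ### Generic lemmas about weighted walks -/

section Generic
variable {V : Type*} {G : SimpleGraph V} {w : V → V → ℝ≥0∞}

lemma wlen_nil {u : V} : wlen G w (SimpleGraph.Walk.nil : G.Walk u u) = 0 := rfl

lemma wlen_cons {u v x : V} (h : G.Adj u v) (p : G.Walk v x) :
    wlen G w (SimpleGraph.Walk.cons h p) = w u v + wlen G w p := rfl

lemma wlen_append {u v x : V} (p : G.Walk u v) (q : G.Walk v x) :
    wlen G w (p.append q) = wlen G w p + wlen G w q := by
  induction p with
  | nil => simp [wlen_nil]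
  | cons h p ih => simp [wlen_cons, SimpleGraph.Walk.cons_append, ih, add_assoc]

lemma wdist_le {u v : V} (p : G.Walk u v) : wdist G w u v ≤ wlen G w p := iInf_le _ _

lemma wdist_self (u : V) : wdist G w u u = 0 :=
  le_antisymm (wdist_le SimpleGraph.Walk.nil) zero_le

lemma wdist_le_w {u v : V} (h : G.Adj u v) : wdist G w u v ≤ w u v := by
  have := wdist_le (w := w) (SimpleGraph.Walk.cons h SimpleGraph.Walk.nil)
  rwa [wlen_cons, wlen_nil, add_zero] at this

lemma wdist_triangle (u m v : V) : wdist G w u v ≤ wdist G w u m + wdist G w m v := by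
  calc wdist G w u v ≤ ⨅ (p : G.Walk u m), ⨅ (q : G.Walk m v), (wlen G w p + wlen G w q) :=
        le_iInf₂ fun p q => (wdist_le (p.append q)).trans_eq (wlen_append p q)
    _ = wdist G w u m + wdist G w m v := by
        rw [wdist, wdist, ENNReal.iInf_add]
        exact iInf_congr fun p => ENNReal.add_iInf.symm

lemma wlen_reverse (hw : ∀ a b, w a b = w b a) {u v : V} (p : G.Walk u v) :
    wlen G w p.reverse = wlen G w p := by
  unfold wlen
  rw [SimpleGraph.Walk.darts_reverse, List.map_reverse, List.sum_reverse, List.map_map]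
  congr 1
  apply List.map_congr_left
  intro d _
  simp [SimpleGraph.Dart.symm, hw]

lemma wdist_symm (hw : ∀ a b, w a b = w b a) (u v : V) :
    wdist G w u v = wdist G w v u := by
  have : ∀ a b : V, wdist G w a b ≤ wdist G w b a := fun a b =>
    le_iInf fun p => by rw [← wlen_reverse hw p]; exact wdist_le _
  exact le_antisymm (this u v) (this v u)

lemma wdist_chain {u m v : V} {c1 c2 : ℕ} (h1 : wdist G w u m ≤ (c1 : ℝ≥0∞))
    (h2 : wdist G w m v ≤ (c2 : ℝ≥0∞)) : wdist G w u v ≤ ((c1 + c2 : ℕ) : ℝ≥0∞) := by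
  refine (wdist_triangle u m v).trans ?_
  push_cast
  exact add_le_add h1 h2

lemma wdist_mono {u v : V} {c M : ℕ} (h : wdist G w u v ≤ (c : ℝ≥0∞)) (hcM : c ≤ M) :
    wdist G w u v ≤ (M : ℝ≥0∞) := h.trans (Nat.cast_le.mpr hcM)

end Generic

/-! ### Gadget-specific lemmas -/

section Gadget
variable {h s ℓ : ℕ} (x y : Fin (2 ^ s) → Fin ℓ → Bool) (α β : ℕ)

lemma gadgetW_symm : ∀ u v : GV h s ℓ, gadgetW x y α β u v = gadgetW x y α β v u := by
  intro u v
  cases u <;> cases v <;> rfl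

/-- The weight function of the gadget, cast to `ℝ≥0∞`. -/
noncomputable abbrev GW : GV h s ℓ → GV h s ℓ → ℝ≥0∞ :=
  fun u v => ((gadgetW x y α β u v : ℕ) : ℝ≥0∞)

lemma GW_symm : ∀ u v : GV h s ℓ, GW x y α β u v = GW x y α β v u := fun u v => by
  simp only [GW, gadgetW_symm x y α β u v]

variable {x y α β}

lemma gdist_symm (u v : GV h s ℓ) :
    wdist (gadget h s ℓ) (GW x y α β) u v = wdist (gadget h s ℓ) (GW x y α β) v u :=
  wdist_symm (GW_symm x y α β) u v

/-- distance is at most a single edge weight, given one-directional base adjacency. -/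
lemma gdist_edge {u v : GV h s ℓ} (hne : u ≠ v) (h0 : gadgetAdj0 u v) (c : ℕ)
    (hw : gadgetW x y α β u v = c) :
    wdist (gadget h s ℓ) (GW x y α β) u v ≤ (c : ℝ≥0∞) := by
  have := wdist_le_w (G := gadget h s ℓ) (w := GW x y α β) ⟨hne, Or.inl h0⟩
  simpa [GW, hw] using this

end Gadget

section Gadget2
variable {h s ℓ : ℕ} {x y : Fin (2 ^ s) → Fin ℓ → Bool} {α β : ℕ}

local notation "gd" => wdist (gadget h s ℓ) (GW x y α β)

/-- root of the tree -/
def rootIdx (h : ℕ) : Fin (2 ^ (h + 1) - 1) :=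
  ⟨0, by have := Nat.one_le_two_pow (n := h + 1); omega⟩

/-- the leaf `t_{h,j+1}` -/
def leafIdx {h : ℕ} (j : Fin (2 ^ h)) : Fin (2 ^ (h + 1) - 1) :=
  ⟨2 ^ h - 1 + j.val, by
    have := j.isLt
    have h2 : 2 ^ (h + 1) = 2 ^ h * 2 := pow_succ 2 h
    have := Nat.one_le_two_pow (n := h)
    omega⟩

def pos0 (h : ℕ) : Fin (2 ^ h) := ⟨0, by positivity⟩

def posL (h : ℕ) : Fin (2 ^ h) := ⟨2 ^ h - 1, by have := Nat.one_le_two_pow (n := h); omega⟩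

def rowA {s : ℕ} (ℓ : ℕ) (z : Bool) (jj : Fin s) : Fin (2 * s + ℓ) :=
  ⟨2 * jj.val + (if z then 1 else 0), by have := jj.isLt; cases z <;> simp <;> omega⟩

def rowB {s : ℕ} (ℓ : ℕ) (z : Bool) (jj : Fin s) : Fin (2 * s + ℓ) :=
  ⟨2 * jj.val + (if z then 0 else 1), by have := jj.isLt; cases z <;> simp <;> omega⟩

def rowS (s : ℕ) {ℓ : ℕ} (j : Fin ℓ) : Fin (2 * s + ℓ) :=
  ⟨2 * s + j.val, by have := j.isLt; omega⟩

lemma rowB_eq_rowA_not {z : Bool} {jj : Fin s} : rowB ℓ z jj = rowA ℓ (!z) jj := by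
  apply Fin.ext
  cases z <;> rfl

/-- walking down the row -/
lemma gdist_row_aux (r : Fin (2 * s + ℓ)) :
    ∀ (d jv : ℕ) (hj : jv + d < 2 ^ h),
      gd (GV.p r ⟨jv + d, hj⟩) (GV.p r ⟨jv, by omega⟩) ≤ ((d : ℕ) : ℝ≥0∞) := by
  intro d
  induction d with
  | zero => intro jv hj; simp [wdist_self]
  | succ d ih =>
      intro jv hj
      have step : gd (GV.p r ⟨jv + (d + 1), hj⟩) (GV.p r ⟨jv + d, by omega⟩) ≤ ((1 : ℕ) : ℝ≥0∞) := by
        refine gdist_edge ?_ ?_ 1 rfl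
        · intro hc
          injection hc with h1 h2
          rw [Fin.mk.injEq] at h2
          omega
        · exact ⟨rfl, by show jv + (d + 1) = jv + d + 1; omega⟩
      have := wdist_chain step (ih jv (by omega))
      exact wdist_mono this (by omega)

lemma gdist_row (r : Fin (2 * s + ℓ)) (j j' : Fin (2 ^ h)) :
    gd (GV.p r j) (GV.p r j') ≤ ((2 ^ h : ℕ) : ℝ≥0∞) := by
  have main : ∀ (j j' : Fin (2 ^ h)), j'.val ≤ j.val →
      gd (GV.p r j) (GV.p r j') ≤ ((2 ^ h : ℕ) : ℝ≥0∞) := by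
    intro j j' hle
    have hj : j = ⟨j'.val + (j.val - j'.val), by have := j.isLt; omega⟩ := by
      apply Fin.ext; simp; omega
    rw [hj]
    exact wdist_mono (gdist_row_aux r (j.val - j'.val) j'.val _) (by have := j.isLt; omega)
  rcases le_total j'.val j.val with hle | hle
  · exact main j j' hle
  · rw [gdist_symm]; exact main j' j hle

/-- climbing the tree to the root -/
lemma gdist_tree_root (m : Fin (2 ^ (h + 1) - 1)) :
    gd (GV.t m) (GV.t (rootIdx h)) ≤ ((2 ^ (h + 1) : ℕ) : ℝ≥0∞) := by
  have aux : ∀ (k : ℕ) (m : Fin (2 ^ (h + 1) - 1)), m.val ≤ k →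
      gd (GV.t m) (GV.t (rootIdx h)) ≤ ((k : ℕ) : ℝ≥0∞) := by
    intro k
    induction k with
    | zero =>
        intro m hm
        have : m = rootIdx h := by apply Fin.ext; simpa [rootIdx] using hm
        simp [this, wdist_self]
    | succ k ih =>
        intro m hm
        by_cases h0 : m.val = 0
        · have : m = rootIdx h := by apply Fin.ext; simpa [rootIdx] using h0
          simp [this, wdist_self]
        · have hparent : (m.val + 1) / 2 - 1 < 2 ^ (h + 1) - 1 := by
            have := m.isLt; omega
          have step : gd (GV.t m) (GV.t ⟨(m.val + 1) / 2 - 1, hparent⟩) ≤ ((1 : ℕ) : ℝ≥0∞) := by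
            refine gdist_edge ?_ ?_ 1 rfl
            · intro hc
              injection hc with h1
              rw [Fin.mk.injEq] at h1
              omega
            · exact ⟨by omega, by show (m.val + 1) / 2 - 1 + 1 = (m.val + 1) / 2; omega⟩
          have := wdist_chain step (ih ⟨(m.val + 1) / 2 - 1, hparent⟩
            (by show (m.val + 1) / 2 - 1 ≤ k; omega))
          exact wdist_mono this (by omega)
  exact aux (2 ^ (h + 1)) m (by have := m.isLt; omega)

lemma gdist_tt (m m' : Fin (2 ^ (h + 1) - 1)) :
    gd (GV.t m) (GV.t m') ≤ ((2 ^ (h + 1) + 2 ^ (h + 1) : ℕ) : ℝ≥0∞) := by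
  refine wdist_chain (gdist_tree_root m) ?_
  rw [gdist_symm]
  exact gdist_tree_root m'

lemma gdist_leaf_p (j : Fin (2 ^ h)) (r : Fin (2 * s + ℓ)) :
    gd (GV.t (leafIdx j)) (GV.p r j) ≤ ((α : ℕ) : ℝ≥0∞) := by
  refine gdist_edge (by intro hc; cases hc) ?_ α rfl
  show (leafIdx j).val + 1 = 2 ^ h + j.val
  have := Nat.one_le_two_pow (n := h)
  simp [leafIdx]
  omega

lemma gdist_pp (r : Fin (2 * s + ℓ)) (j : Fin (2 ^ h)) (r' : Fin (2 * s + ℓ)) (j' : Fin (2 ^ h)) :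
    gd (GV.p r j) (GV.p r' j') ≤ ((α + α + 2 ^ h : ℕ) : ℝ≥0∞) := by
  refine wdist_chain (wdist_chain ?_ (gdist_leaf_p j r')) (gdist_row r' j j')
  rw [gdist_symm]
  exact gdist_leaf_p j r

lemma gdist_tp (m : Fin (2 ^ (h + 1) - 1)) (r : Fin (2 * s + ℓ)) (j : Fin (2 ^ h)) :
    gd (GV.t m) (GV.p r j) ≤ ((2 ^ (h + 1) + 2 ^ (h + 1) + α : ℕ) : ℝ≥0∞) :=
  wdist_chain (gdist_tt m (leafIdx j)) (gdist_leaf_p j r)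

end Gadget2

section Gadget3
variable {h s ℓ : ℕ} {x y : Fin (2 ^ s) → Fin ℓ → Bool} {α β : ℕ}

local notation "gd" => wdist (gadget h s ℓ) (GW x y α β)

/-- attach edges of hubs to their rows -/
lemma gdist_ah_p (z : Bool) (jj : Fin s) :
    gd (GV.ah z jj) (GV.p (rowA ℓ z jj) (pos0 h)) ≤ ((1 : ℕ) : ℝ≥0∞) := by
  refine gdist_edge (by intro hc; cases hc) ?_ 1 rfl
  exact ⟨rfl, rfl⟩

lemma gdist_bh_p (z : Bool) (jj : Fin s) :
    gd (GV.bh z jj) (GV.p (rowB ℓ z jj) (posL h)) ≤ ((1 : ℕ) : ℝ≥0∞) := by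
  refine gdist_edge (by intro hc; cases hc) ?_ 1 rfl
  exact ⟨rfl, rfl⟩

lemma gdist_as_p (j : Fin ℓ) :
    gd (GV.as j) (GV.p (rowS s j) (pos0 h)) ≤ ((1 : ℕ) : ℝ≥0∞) := by
  refine gdist_edge (by intro hc; cases hc) ?_ 1 rfl
  exact ⟨rfl, rfl⟩

lemma gdist_bs_p (j : Fin ℓ) :
    gd (GV.bs j) (GV.p (rowS s j) (posL h)) ≤ ((1 : ℕ) : ℝ≥0∞) := by
  refine gdist_edge (by intro hc; cases hc) ?_ 1 rfl
  exact ⟨rfl, rfl⟩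

/-- clique distances -/
lemma gdist_aa (i i' : Fin (2 ^ s)) : gd (GV.a i) (GV.a i') ≤ ((α : ℕ) : ℝ≥0∞) := by
  by_cases hii : i = i'
  · subst hii; simp [wdist_self]
  · refine gdist_edge (by intro hc; injection hc with h1; exact hii h1) ?_ α rfl
    exact hii

lemma gdist_bb (i i' : Fin (2 ^ s)) : gd (GV.b i) (GV.b i') ≤ ((α : ℕ) : ℝ≥0∞) := by
  by_cases hii : i = i'
  · subst hii; simp [wdist_self]
  · refine gdist_edge (by intro hc; injection hc with h1; exact hii h1) ?_ α rfl
    exact hii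

lemma gdist_a_ah_of {i : Fin (2 ^ s)} {z : Bool} {jj : Fin s}
    (hbit : i.val.testBit jj.val = z) : gd (GV.a i) (GV.ah z jj) ≤ ((α : ℕ) : ℝ≥0∞) := by
  refine gdist_edge (by intro hc; cases hc) ?_ α rfl
  exact hbit.symm

lemma gdist_b_bh_of {i : Fin (2 ^ s)} {z : Bool} {jj : Fin s}
    (hbit : i.val.testBit jj.val = z) : gd (GV.b i) (GV.bh z jj) ≤ ((α : ℕ) : ℝ≥0∞) := by
  refine gdist_edge (by intro hc; cases hc) ?_ α rfl
  exact hbit.symm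

/-- an index whose bit `jj` equals `z` and which is clique-close to `i` -/
def flipIdx (i : Fin (2 ^ s)) (jj : Fin s) (z : Bool) : Fin (2 ^ s) :=
  if i.val.testBit jj.val = z then i
  else ⟨i.val ^^^ 2 ^ jj.val, Nat.xor_lt_two_pow i.isLt
    (Nat.pow_lt_pow_right (by norm_num) jj.isLt)⟩

lemma flipIdx_testBit (i : Fin (2 ^ s)) (jj : Fin s) (z : Bool) :
    (flipIdx i jj z).val.testBit jj.val = z := by
  unfold flipIdx
  split
  · assumption
  · rename_i hne
    rw [Nat.testBit_xor, Nat.testBit_two_pow_self]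
    cases hb : i.val.testBit jj.val <;> cases z <;> simp_all

lemma gdist_a_ah (i : Fin (2 ^ s)) (z : Bool) (jj : Fin s) :
    gd (GV.a i) (GV.ah z jj) ≤ ((α + α : ℕ) : ℝ≥0∞) :=
  wdist_chain (gdist_aa i (flipIdx i jj z)) (gdist_a_ah_of (flipIdx_testBit i jj z))

lemma gdist_b_bh (i : Fin (2 ^ s)) (z : Bool) (jj : Fin s) :
    gd (GV.b i) (GV.bh z jj) ≤ ((α + α : ℕ) : ℝ≥0∞) :=
  wdist_chain (gdist_bb i (flipIdx i jj z)) (gdist_b_bh_of (flipIdx_testBit i jj z))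

lemma gdist_a_as (hαβ : α ≤ β) (i : Fin (2 ^ s)) (j : Fin ℓ) :
    gd (GV.a i) (GV.as j) ≤ ((β : ℕ) : ℝ≥0∞) := by
  refine wdist_mono (gdist_edge (by intro hc; cases hc)
    (show gadgetAdj0 (GV.a i) (GV.as j) from trivial) (if x i j then α else β) rfl) ?_
  split <;> omega

lemma gdist_b_bs (hαβ : α ≤ β) (i : Fin (2 ^ s)) (j : Fin ℓ) :
    gd (GV.b i) (GV.bs j) ≤ ((β : ℕ) : ℝ≥0∞) := by
  refine wdist_mono (gdist_edge (by intro hc; cases hc)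
    (show gadgetAdj0 (GV.b i) (GV.bs j) from trivial) (if y i j then α else β) rfl) ?_
  split <;> omega

lemma gdist_a_as_of {i : Fin (2 ^ s)} {j : Fin ℓ} (hx : x i j = true) :
    gd (GV.a i) (GV.as j) ≤ ((α : ℕ) : ℝ≥0∞) := by
  refine gdist_edge (by intro hc; cases hc) ?_ α (by simp [gadgetW, hx])
  exact trivial

lemma gdist_b_bs_of {i : Fin (2 ^ s)} {j : Fin ℓ} (hy : y i j = true) :
    gd (GV.b i) (GV.bs j) ≤ ((α : ℕ) : ℝ≥0∞) := by
  refine gdist_edge (by intro hc; cases hc) ?_ α (by simp [gadgetW, hy])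
  exact trivial

end Gadget3

section Gadget4
variable {h s ℓ : ℕ} {x y : Fin (2 ^ s) → Fin ℓ → Bool} {α β : ℕ}

local notation "gd" => wdist (gadget h s ℓ) (GW x y α β)

lemma gdist_flip {u v : GV h s ℓ} {c : ℕ} (hc : gd u v ≤ (c : ℝ≥0∞)) : gd v u ≤ (c : ℝ≥0∞) := by
  rw [gdist_symm]; exact hc

/-- tree to hubs -/
lemma gdist_t_ah (m : Fin (2 ^ (h + 1) - 1)) (z : Bool) (jj : Fin s) :
    gd (GV.t m) (GV.ah z jj) ≤ ((2 ^ (h + 1) + 2 ^ (h + 1) + α + 1 : ℕ) : ℝ≥0∞) :=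
  wdist_chain (gdist_tp m (rowA ℓ z jj) (pos0 h)) (gdist_flip (gdist_ah_p z jj))

lemma gdist_t_bh (m : Fin (2 ^ (h + 1) - 1)) (z : Bool) (jj : Fin s) :
    gd (GV.t m) (GV.bh z jj) ≤ ((2 ^ (h + 1) + 2 ^ (h + 1) + α + 1 : ℕ) : ℝ≥0∞) :=
  wdist_chain (gdist_tp m (rowB ℓ z jj) (posL h)) (gdist_flip (gdist_bh_p z jj))

lemma gdist_t_as (m : Fin (2 ^ (h + 1) - 1)) (j : Fin ℓ) :
    gd (GV.t m) (GV.as j) ≤ ((2 ^ (h + 1) + 2 ^ (h + 1) + α + 1 : ℕ) : ℝ≥0∞) :=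
  wdist_chain (gdist_tp m (rowS s j) (pos0 h)) (gdist_flip (gdist_as_p j))

lemma gdist_t_bs (m : Fin (2 ^ (h + 1) - 1)) (j : Fin ℓ) :
    gd (GV.t m) (GV.bs j) ≤ ((2 ^ (h + 1) + 2 ^ (h + 1) + α + 1 : ℕ) : ℝ≥0∞) :=
  wdist_chain (gdist_tp m (rowS s j) (posL h)) (gdist_flip (gdist_bs_p j))

/-- path nodes to hubs -/
lemma gdist_p_ah (r : Fin (2 * s + ℓ)) (j : Fin (2 ^ h)) (z : Bool) (jj : Fin s) :
    gd (GV.p r j) (GV.ah z jj) ≤ ((α + α + 2 ^ h + 1 : ℕ) : ℝ≥0∞) :=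
  wdist_chain (gdist_pp r j (rowA ℓ z jj) (pos0 h)) (gdist_flip (gdist_ah_p z jj))

lemma gdist_p_bh (r : Fin (2 * s + ℓ)) (j : Fin (2 ^ h)) (z : Bool) (jj : Fin s) :
    gd (GV.p r j) (GV.bh z jj) ≤ ((α + α + 2 ^ h + 1 : ℕ) : ℝ≥0∞) :=
  wdist_chain (gdist_pp r j (rowB ℓ z jj) (posL h)) (gdist_flip (gdist_bh_p z jj))

lemma gdist_p_as (r : Fin (2 * s + ℓ)) (j : Fin (2 ^ h)) (jx : Fin ℓ) :
    gd (GV.p r j) (GV.as jx) ≤ ((α + α + 2 ^ h + 1 : ℕ) : ℝ≥0∞) :=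
  wdist_chain (gdist_pp r j (rowS s jx) (pos0 h)) (gdist_flip (gdist_as_p jx))

lemma gdist_p_bs (r : Fin (2 * s + ℓ)) (j : Fin (2 ^ h)) (jx : Fin ℓ) :
    gd (GV.p r j) (GV.bs jx) ≤ ((α + α + 2 ^ h + 1 : ℕ) : ℝ≥0∞) :=
  wdist_chain (gdist_pp r j (rowS s jx) (posL h)) (gdist_flip (gdist_bs_p jx))

/-- `a_i` to path nodes -/
lemma gdist_a_p (hβ : β = α + α) (i : Fin (2 ^ s)) (r : Fin (2 * s + ℓ)) (j' : Fin (2 ^ h)) :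
    gd (GV.a i) (GV.p r j') ≤ ((α + α + 1 + 2 ^ h : ℕ) : ℝ≥0∞) := by
  by_cases hr : r.val < 2 * s
  · have hjj : r.val / 2 < s := by omega
    refine wdist_mono (wdist_chain (c1 := α + α + 1) (c2 := 2 ^ h)
      (wdist_chain (c1 := α + α) (c2 := 1)
        (gdist_a_ah i (decide (r.val % 2 = 1)) ⟨r.val / 2, hjj⟩) ?_)
      (gdist_row r (pos0 h) j')) (by omega)
    have hrow : rowA ℓ (decide (r.val % 2 = 1)) ⟨r.val / 2, hjj⟩ = r := by
      apply Fin.ext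
      show 2 * (r.val / 2) + (if decide (r.val % 2 = 1) then 1 else 0) = r.val
      by_cases h2 : r.val % 2 = 1 <;> simp [h2] <;> omega
    have hat := gdist_ah_p (h := h) (x := x) (y := y) (α := α) (β := β)
      (decide (r.val % 2 = 1)) ⟨r.val / 2, hjj⟩
    rwa [hrow] at hat
  · have hjX : r.val - 2 * s < ℓ := by have := r.isLt; omega
    refine wdist_mono (wdist_chain (c1 := α + α + 1) (c2 := 2 ^ h)
      (wdist_chain (c1 := α + α) (c2 := 1)
        (wdist_mono (gdist_a_as (by omega) i ⟨r.val - 2 * s, hjX⟩) (by omega)) ?_)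
      (gdist_row r (pos0 h) j')) (by omega)
    have hrow : rowS s (⟨r.val - 2 * s, hjX⟩ : Fin ℓ) = r := by
      apply Fin.ext
      show 2 * s + (r.val - 2 * s) = r.val
      omega
    have hat := gdist_as_p (h := h) (x := x) (y := y) (α := α) (β := β) ⟨r.val - 2 * s, hjX⟩
    rwa [hrow] at hat

/-- `b_i` to path nodes -/
lemma gdist_b_p (hβ : β = α + α) (i : Fin (2 ^ s)) (r : Fin (2 * s + ℓ)) (j' : Fin (2 ^ h)) :
    gd (GV.b i) (GV.p r j') ≤ ((α + α + 1 + 2 ^ h : ℕ) : ℝ≥0∞) := by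
  by_cases hr : r.val < 2 * s
  · have hjj : r.val / 2 < s := by omega
    refine wdist_mono (wdist_chain (c1 := α + α + 1) (c2 := 2 ^ h)
      (wdist_chain (c1 := α + α) (c2 := 1)
        (gdist_b_bh i (decide (r.val % 2 = 0)) ⟨r.val / 2, hjj⟩) ?_)
      (gdist_row r (posL h) j')) (by omega)
    have hrow : rowB ℓ (decide (r.val % 2 = 0)) ⟨r.val / 2, hjj⟩ = r := by
      apply Fin.ext
      show 2 * (r.val / 2) + (if decide (r.val % 2 = 0) then 0 else 1) = r.val
      by_cases h2 : r.val % 2 = 0 <;> simp [h2] <;> omega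
    have hat := gdist_bh_p (h := h) (x := x) (y := y) (α := α) (β := β)
      (decide (r.val % 2 = 0)) ⟨r.val / 2, hjj⟩
    rwa [hrow] at hat
  · have hjX : r.val - 2 * s < ℓ := by have := r.isLt; omega
    refine wdist_mono (wdist_chain (c1 := α + α + 1) (c2 := 2 ^ h)
      (wdist_chain (c1 := α + α) (c2 := 1)
        (wdist_mono (gdist_b_bs (by omega) i ⟨r.val - 2 * s, hjX⟩) (by omega)) ?_)
      (gdist_row r (posL h) j')) (by omega)
    have hrow : rowS s (⟨r.val - 2 * s, hjX⟩ : Fin ℓ) = r := by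
      apply Fin.ext
      show 2 * s + (r.val - 2 * s) = r.val
      omega
    have hat := gdist_bs_p (h := h) (x := x) (y := y) (α := α) (β := β) ⟨r.val - 2 * s, hjX⟩
    rwa [hrow] at hat

/-- `a_i` to tree nodes -/
lemma gdist_a_t (hs1 : 1 ≤ s) (i : Fin (2 ^ s)) (m : Fin (2 ^ (h + 1) - 1)) :
    gd (GV.a i) (GV.t m) ≤
      ((α + 1 + (2 ^ (h + 1) + 2 ^ (h + 1) + α) : ℕ) : ℝ≥0∞) :=
  wdist_chain (wdist_chain (c1 := α) (c2 := 1)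
      (gdist_a_ah_of (i := i) (jj := ⟨0, hs1⟩) rfl) (gdist_ah_p _ _))
    (gdist_flip (gdist_tp m _ _))

lemma gdist_b_t (hs1 : 1 ≤ s) (i : Fin (2 ^ s)) (m : Fin (2 ^ (h + 1) - 1)) :
    gd (GV.b i) (GV.t m) ≤
      ((α + 1 + (2 ^ (h + 1) + 2 ^ (h + 1) + α) : ℕ) : ℝ≥0∞) :=
  wdist_chain (wdist_chain (c1 := α) (c2 := 1)
      (gdist_b_bh_of (i := i) (jj := ⟨0, hs1⟩) rfl) (gdist_bh_p _ _))
    (gdist_flip (gdist_tp m _ _))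

lemma rowA_eq_rowB_not {z : Bool} {jj : Fin s} : rowA ℓ z jj = rowB ℓ (!z) jj := by
  apply Fin.ext; cases z <;> rfl

/-- `a_i` to `b`-hubs -/
lemma gdist_a_bh (i : Fin (2 ^ s)) (z : Bool) (jj : Fin s) :
    gd (GV.a i) (GV.bh z jj) ≤ ((α + α + 1 + 2 ^ h + 1 : ℕ) : ℝ≥0∞) := by
  refine wdist_chain (wdist_chain (c1 := α + α + 1) (c2 := 2 ^ h)
    (wdist_chain (gdist_a_ah i (!z) jj) (gdist_ah_p (!z) jj))
    (gdist_row _ (pos0 h) (posL h))) ?_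
  refine gdist_flip ?_
  have h2 := gdist_bh_p (h := h) (x := x) (y := y) (α := α) (β := β) z jj
  rwa [rowB_eq_rowA_not] at h2

lemma gdist_b_ah (i : Fin (2 ^ s)) (z : Bool) (jj : Fin s) :
    gd (GV.b i) (GV.ah z jj) ≤ ((α + α + 1 + 2 ^ h + 1 : ℕ) : ℝ≥0∞) := by
  refine wdist_chain (wdist_chain (c1 := α + α + 1) (c2 := 2 ^ h)
    (wdist_chain (gdist_b_bh i (!z) jj) (gdist_bh_p (!z) jj))
    (gdist_row _ (posL h) (pos0 h))) ?_
  refine gdist_flip ?_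
  have h2 := gdist_ah_p (h := h) (x := x) (y := y) (α := α) (β := β) z jj
  rwa [rowA_eq_rowB_not] at h2

/-- `a_i` to `b*`-nodes -/
lemma gdist_a_bs (hβ : β = α + α) (i : Fin (2 ^ s)) (j : Fin ℓ) :
    gd (GV.a i) (GV.bs j) ≤ ((α + α + 1 + 2 ^ h + 1 : ℕ) : ℝ≥0∞) :=
  wdist_chain (wdist_chain (c1 := α + α + 1) (c2 := 2 ^ h)
    (wdist_chain (c1 := α + α) (c2 := 1)
      (wdist_mono (gdist_a_as (by omega) i j) (by omega)) (gdist_as_p j))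
    (gdist_row _ (pos0 h) (posL h))) (gdist_flip (gdist_bs_p j))

lemma gdist_b_as (hβ : β = α + α) (i : Fin (2 ^ s)) (j : Fin ℓ) :
    gd (GV.b i) (GV.as j) ≤ ((α + α + 1 + 2 ^ h + 1 : ℕ) : ℝ≥0∞) :=
  wdist_chain (wdist_chain (c1 := α + α + 1) (c2 := 2 ^ h)
    (wdist_chain (c1 := α + α) (c2 := 1)
      (wdist_mono (gdist_b_bs (by omega) i j) (by omega)) (gdist_bs_p j))
    (gdist_row _ (posL h) (pos0 h))) (gdist_flip (gdist_as_p j))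

lemma exists_diff_bit {i i' : Fin (2 ^ s)} (hne : i ≠ i') :
    ∃ jj : Fin s, i.val.testBit jj.val ≠ i'.val.testBit jj.val := by
  by_contra hc
  push_neg at hc
  apply hne
  apply Fin.ext
  apply Nat.eq_of_testBit_eq
  intro k
  by_cases hk : k < s
  · exact hc ⟨k, hk⟩
  · have h1 : i.val < 2 ^ k := lt_of_lt_of_le i.isLt (Nat.pow_le_pow_right (by norm_num) (by omega))
    have h2 : i'.val < 2 ^ k :=
      lt_of_lt_of_le i'.isLt (Nat.pow_le_pow_right (by norm_num) (by omega))
    rw [Nat.testBit_lt_two_pow h1, Nat.testBit_lt_two_pow h2]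

/-- `a_i` to `b_{i'}`, distinct indices -/
lemma gdist_a_b_ne {i i' : Fin (2 ^ s)} (hne : i ≠ i') :
    gd (GV.a i) (GV.b i') ≤ ((α + 1 + 2 ^ h + (1 + α) : ℕ) : ℝ≥0∞) := by
  obtain ⟨jj, hjj⟩ := exists_diff_bit hne
  set z := i.val.testBit jj.val with hz
  refine wdist_chain (wdist_chain (c1 := α + 1) (c2 := 2 ^ h)
    (wdist_chain (c1 := α) (c2 := 1) (gdist_a_ah_of rfl) (gdist_ah_p z jj))
    (gdist_row _ (pos0 h) (posL h)))
    (wdist_chain (m := GV.bh (!z) jj) (c1 := 1) (c2 := α) ?att ?bb)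
  case att =>
    refine gdist_flip ?_
    have h2 := gdist_bh_p (h := h) (x := x) (y := y) (α := α) (β := β) (!z) jj
    rwa [rowB_eq_rowA_not, Bool.not_not] at h2
  case bb =>
    refine gdist_flip (gdist_b_bh_of ?_)
    cases hb : i'.val.testBit jj.val <;> cases hzz : z <;> simp_all

/-- `a_i` to `b_i`, given a common witness column -/
lemma gdist_a_b_F {i : Fin (2 ^ s)} {j : Fin ℓ} (hx : x i j = true) (hy : y i j = true) :
    gd (GV.a i) (GV.b i) ≤ ((α + 1 + 2 ^ h + (1 + α) : ℕ) : ℝ≥0∞) :=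
  wdist_chain (wdist_chain (c1 := α + 1) (c2 := 2 ^ h)
    (wdist_chain (c1 := α) (c2 := 1) (gdist_a_as_of hx) (gdist_as_p j))
    (gdist_row _ (pos0 h) (posL h)))
    (wdist_chain (c1 := 1) (c2 := α) (gdist_flip (gdist_bs_p j)) (gdist_flip (gdist_b_bs_of hy)))

/-- hubs to hubs, generic bound -/
lemma gdist_hub_hub {u : GV h s ℓ} {r0 : Fin (2 * s + ℓ)} {j0 : Fin (2 ^ h)}
    (hu : gd u (GV.p r0 j0) ≤ ((1 : ℕ) : ℝ≥0∞)) {v : GV h s ℓ} {r1 : Fin (2 * s + ℓ)}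
    {j1 : Fin (2 ^ h)} (hv : gd v (GV.p r1 j1) ≤ ((1 : ℕ) : ℝ≥0∞)) :
    gd u v ≤ ((1 + (α + α + 2 ^ h) + 1 : ℕ) : ℝ≥0∞) :=
  wdist_chain (wdist_chain hu (gdist_pp r0 j0 r1 j1)) (gdist_flip hv)

end Gadget4

section Gadget5
variable {h s ℓ : ℕ} {x y : Fin (2 ^ s) → Fin ℓ → Bool} {α β : ℕ}

local notation "gd" => wdist (gadget h s ℓ) (GW x y α β)

/-- The diameter upper bound when `F(x,y) = 1`. -/
lemma gdiam_pair (hs1 : 1 ≤ s) (hβ : β = α + α)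
    (hF : ∀ i, ∃ j, x i j = true ∧ y i j = true) (u v : GV h s ℓ) :
    gd u v ≤ ((α + α + 2 ^ (h + 3) : ℕ) : ℝ≥0∞) := by
  have e1 : 2 ^ (h + 1) = 2 * 2 ^ h := by rw [pow_succ]; ring
  have e3 : 2 ^ (h + 3) = 8 * 2 ^ h := by rw [pow_add]; ring
  have hL : 1 ≤ 2 ^ h := Nat.one_le_two_pow
  have hab : ∀ i i' : Fin (2 ^ s),
      gd (GV.a i) (GV.b i') ≤ ((α + 1 + 2 ^ h + (1 + α) : ℕ) : ℝ≥0∞) := by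
    intro i i'
    by_cases hii : i = i'
    · subst hii
      obtain ⟨j, hx, hy⟩ := hF i
      exact gdist_a_b_F hx hy
    · exact gdist_a_b_ne hii
  cases u with
  | t m =>
    cases v with
    | t m' => exact wdist_mono (gdist_tt m m') (by omega)
    | p r j => exact wdist_mono (gdist_tp m r j) (by omega)
    | a i => exact wdist_mono (gdist_flip (gdist_a_t hs1 i m)) (by omega)
    | b i => exact wdist_mono (gdist_flip (gdist_b_t hs1 i m)) (by omega)
    | ah z jj => exact wdist_mono (gdist_t_ah m z jj) (by omega)
    | bh z jj => exact wdist_mono (gdist_t_bh m z jj) (by omega)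
    | as j => exact wdist_mono (gdist_t_as m j) (by omega)
    | bs j => exact wdist_mono (gdist_t_bs m j) (by omega)
  | p r j =>
    cases v with
    | t m => exact wdist_mono (gdist_flip (gdist_tp m r j)) (by omega)
    | p r' j' => exact wdist_mono (gdist_pp r j r' j') (by omega)
    | a i => exact wdist_mono (gdist_flip (gdist_a_p hβ i r j)) (by omega)
    | b i => exact wdist_mono (gdist_flip (gdist_b_p hβ i r j)) (by omega)
    | ah z jj => exact wdist_mono (gdist_p_ah r j z jj) (by omega)
    | bh z jj => exact wdist_mono (gdist_p_bh r j z jj) (by omega)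
    | as jx => exact wdist_mono (gdist_p_as r j jx) (by omega)
    | bs jx => exact wdist_mono (gdist_p_bs r j jx) (by omega)
  | a i =>
    cases v with
    | t m => exact wdist_mono (gdist_a_t hs1 i m) (by omega)
    | p r j => exact wdist_mono (gdist_a_p hβ i r j) (by omega)
    | a i' => exact wdist_mono (gdist_aa i i') (by omega)
    | b i' => exact wdist_mono (hab i i') (by omega)
    | ah z jj => exact wdist_mono (gdist_a_ah i z jj) (by omega)
    | bh z jj => exact wdist_mono (gdist_a_bh i z jj) (by omega)
    | as jx => exact wdist_mono (gdist_a_as (by omega) i jx) (by omega)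
    | bs jx => exact wdist_mono (gdist_a_bs hβ i jx) (by omega)
  | b i =>
    cases v with
    | t m => exact wdist_mono (gdist_b_t hs1 i m) (by omega)
    | p r j => exact wdist_mono (gdist_b_p hβ i r j) (by omega)
    | a i' => exact wdist_mono (gdist_flip (hab i' i)) (by omega)
    | b i' => exact wdist_mono (gdist_bb i i') (by omega)
    | ah z jj => exact wdist_mono (gdist_b_ah i z jj) (by omega)
    | bh z jj => exact wdist_mono (gdist_b_bh i z jj) (by omega)
    | as jx => exact wdist_mono (gdist_b_as hβ i jx) (by omega)
    | bs jx => exact wdist_mono (gdist_b_bs (by omega) i jx) (by omega)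
  | ah z jj =>
    cases v with
    | t m => exact wdist_mono (gdist_flip (gdist_t_ah m z jj)) (by omega)
    | p r j => exact wdist_mono (gdist_flip (gdist_p_ah r j z jj)) (by omega)
    | a i => exact wdist_mono (gdist_flip (gdist_a_ah i z jj)) (by omega)
    | b i => exact wdist_mono (gdist_flip (gdist_b_ah i z jj)) (by omega)
    | ah z' jj' =>
        exact wdist_mono (gdist_hub_hub (gdist_ah_p z jj) (gdist_ah_p z' jj')) (by omega)
    | bh z' jj' =>
        exact wdist_mono (gdist_hub_hub (gdist_ah_p z jj) (gdist_bh_p z' jj')) (by omega)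
    | as jx => exact wdist_mono (gdist_hub_hub (gdist_ah_p z jj) (gdist_as_p jx)) (by omega)
    | bs jx => exact wdist_mono (gdist_hub_hub (gdist_ah_p z jj) (gdist_bs_p jx)) (by omega)
  | bh z jj =>
    cases v with
    | t m => exact wdist_mono (gdist_flip (gdist_t_bh m z jj)) (by omega)
    | p r j => exact wdist_mono (gdist_flip (gdist_p_bh r j z jj)) (by omega)
    | a i => exact wdist_mono (gdist_flip (gdist_a_bh i z jj)) (by omega)
    | b i => exact wdist_mono (gdist_flip (gdist_b_bh i z jj)) (by omega)
    | ah z' jj' =>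
        exact wdist_mono (gdist_hub_hub (gdist_bh_p z jj) (gdist_ah_p z' jj')) (by omega)
    | bh z' jj' =>
        exact wdist_mono (gdist_hub_hub (gdist_bh_p z jj) (gdist_bh_p z' jj')) (by omega)
    | as jx => exact wdist_mono (gdist_hub_hub (gdist_bh_p z jj) (gdist_as_p jx)) (by omega)
    | bs jx => exact wdist_mono (gdist_hub_hub (gdist_bh_p z jj) (gdist_bs_p jx)) (by omega)
  | as jx =>
    cases v with
    | t m => exact wdist_mono (gdist_flip (gdist_t_as m jx)) (by omega)
    | p r j => exact wdist_mono (gdist_flip (gdist_p_as r j jx)) (by omega)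
    | a i => exact wdist_mono (gdist_flip (gdist_a_as (by omega) i jx)) (by omega)
    | b i => exact wdist_mono (gdist_flip (gdist_b_as hβ i jx)) (by omega)
    | ah z' jj' =>
        exact wdist_mono (gdist_hub_hub (gdist_as_p jx) (gdist_ah_p z' jj')) (by omega)
    | bh z' jj' =>
        exact wdist_mono (gdist_hub_hub (gdist_as_p jx) (gdist_bh_p z' jj')) (by omega)
    | as jx' => exact wdist_mono (gdist_hub_hub (gdist_as_p jx) (gdist_as_p jx')) (by omega)
    | bs jx' => exact wdist_mono (gdist_hub_hub (gdist_as_p jx) (gdist_bs_p jx')) (by omega)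
  | bs jx =>
    cases v with
    | t m => exact wdist_mono (gdist_flip (gdist_t_bs m jx)) (by omega)
    | p r j => exact wdist_mono (gdist_flip (gdist_p_bs r j jx)) (by omega)
    | a i => exact wdist_mono (gdist_flip (gdist_a_bs hβ i jx)) (by omega)
    | b i => exact wdist_mono (gdist_flip (gdist_b_bs (by omega) i jx)) (by omega)
    | ah z' jj' =>
        exact wdist_mono (gdist_hub_hub (gdist_bs_p jx) (gdist_ah_p z' jj')) (by omega)
    | bh z' jj' =>
        exact wdist_mono (gdist_hub_hub (gdist_bs_p jx) (gdist_bh_p z' jj')) (by omega)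
    | as jx' => exact wdist_mono (gdist_hub_hub (gdist_bs_p jx) (gdist_as_p jx')) (by omega)
    | bs jx' => exact wdist_mono (gdist_hub_hub (gdist_bs_p jx) (gdist_bs_p jx')) (by omega)

end Gadget5

section Lower
variable {h s ℓ : ℕ} {x y : Fin (2 ^ s) → Fin ℓ → Bool} {α β : ℕ}

/-- The potential function witnessing the lower bound `3α` on `d(a_{i0}, b_{i0})`
when row `i0` of `F` fails. -/
def pot (x : Fin (2 ^ s) → Fin ℓ → Bool) (α : ℕ) (i0 : Fin (2 ^ s)) : GV h s ℓ → ℕ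
  | .t _ => α
  | .p r _ =>
      if h2s : r.val < 2 * s then
        (if decide (r.val % 2 = 1) = i0.val.testBit (r.val / 2) then α else 2 * α)
      else (if x i0 ⟨r.val - 2 * s, by have := r.isLt; omega⟩ then α else 2 * α)
  | .a i => if i = i0 then 0 else α
  | .b i => if i = i0 then 3 * α else 2 * α
  | .ah z jj => if z = i0.val.testBit jj.val then α else 2 * α
  | .bh z jj => if z = i0.val.testBit jj.val then 2 * α else α
  | .as j => if x i0 j then α else 2 * α
  | .bs j => if x i0 j then α else 2 * α

lemma pot_adj {i0 : Fin (2 ^ s)} (hβ : β = 2 * α)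
    (h0 : ∀ j, ¬(x i0 j = true ∧ y i0 j = true)) :
    ∀ u v : GV h s ℓ, gadgetAdj0 u v →
      pot x α i0 v ≤ pot x α i0 u + gadgetW x y α β u v ∧
      pot x α i0 u ≤ pot x α i0 v + gadgetW x y α β u v := by
  intro u v hadj
  rcases u with m | ⟨r, j⟩ | i | i | ⟨z, jj⟩ | ⟨z, jj⟩ | jx | jx <;>
    rcases v with m' | ⟨r', j'⟩ | i' | i' | ⟨z', jj'⟩ | ⟨z', jj'⟩ | jx' | jx' <;>
    simp only [gadgetAdj0] at hadj <;> try exact hadj.elim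
  -- t t
  · simp only [pot, gadgetW]; omega
  -- t p
  · simp only [pot, gadgetW]; split_ifs <;> omega
  -- p p
  · obtain ⟨h1, h2⟩ := hadj
    subst h1
    simp only [pot, gadgetW]
    omega
  -- a a
  · simp only [pot, gadgetW]; split_ifs <;> omega
  -- a ah
  · subst hadj
    by_cases h1 : i = i0
    · subst h1
      simp only [pot, gadgetW]
      split_ifs <;> first | omega | simp_all
    · simp only [pot, gadgetW, if_neg h1]
      split_ifs <;> omega
  -- a as
  · by_cases h1 : i = i0
    · subst h1
      simp only [pot, gadgetW]
      split_ifs <;> first | omega | simp_all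
    · simp only [pot, gadgetW, if_neg h1]
      split_ifs <;> omega
  -- b b
  · simp only [pot, gadgetW]; split_ifs <;> omega
  -- b bh
  · subst hadj
    by_cases h1 : i = i0
    · subst h1
      simp only [pot, gadgetW]
      split_ifs <;> first | omega | simp_all
    · simp only [pot, gadgetW, if_neg h1]
      split_ifs <;> omega
  -- b bs
  · have h0j := h0 jx'
    by_cases h1 : i = i0
    · subst h1
      simp only [pot, gadgetW]
      split_ifs <;> first | omega | simp_all
    · simp only [pot, gadgetW, if_neg h1]
      split_ifs <;> omega
  -- ah p
  · obtain ⟨h1, h2⟩ := hadj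
    have hjj := jj.isLt
    have hlt : r'.val < 2 * s := by cases z <;> simp at h1 <;> omega
    have e2 : r'.val / 2 = jj.val := by cases z <;> simp at h1 <;> omega
    have e4 : decide (r'.val % 2 = 1) = z := by
      cases z
      · simp only [decide_eq_false_iff_not]; simp at h1; omega
      · simp only [decide_eq_true_eq]; simp at h1; omega
    simp only [pot, gadgetW, dif_pos hlt, e2, e4]
    omega
  -- bh p
  · obtain ⟨h1, h2⟩ := hadj
    have hjj := jj.isLt
    have hlt : r'.val < 2 * s := by cases z <;> simp at h1 <;> omega
    have e2 : r'.val / 2 = jj.val := by cases z <;> simp at h1 <;> omega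
    have e4 : decide (r'.val % 2 = 1) = !z := by
      cases z
      · simp only [Bool.not_false, decide_eq_true_eq]; simp at h1; omega
      · simp only [Bool.not_true, decide_eq_false_iff_not]; simp at h1; omega
    simp only [pot, gadgetW, dif_pos hlt, e2, e4]
    cases z <;> cases hb : (i0.val).testBit jj.val <;> simp [hb] <;> omega
  -- as p
  · obtain ⟨h1, h2⟩ := hadj
    have hlt : ¬ r'.val < 2 * s := by omega
    simp only [pot, gadgetW, dif_neg hlt]
    have e : (⟨r'.val - 2 * s, by have := r'.isLt; omega⟩ : Fin ℓ) = jx := by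
      apply Fin.ext; simp; omega
    simp only [e]
    omega
  -- bs p
  · obtain ⟨h1, h2⟩ := hadj
    have hlt : ¬ r'.val < 2 * s := by omega
    simp only [pot, gadgetW, dif_neg hlt]
    have e : (⟨r'.val - 2 * s, by have := r'.isLt; omega⟩ : Fin ℓ) = jx := by
      apply Fin.ext; simp; omega
    simp only [e]
    omega

lemma pot_wdist {i0 : Fin (2 ^ s)} (hβ : β = 2 * α)
    (h0 : ∀ j, ¬(x i0 j = true ∧ y i0 j = true)) :
    ((3 * α : ℕ) : ℝ≥0∞) ≤ wdist (gadget h s ℓ) (GW x y α β) (GV.a i0) (GV.b i0) := by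
  have lip : ∀ u v : GV h s ℓ, (gadget h s ℓ).Adj u v →
      (pot x α i0 v : ℝ≥0∞) ≤ (pot x α i0 u : ℝ≥0∞) + GW x y α β u v := by
    rintro u v ⟨hne, hor⟩
    rcases hor with h1 | h1
    · have := (pot_adj hβ h0 u v h1).1
      have h2 : (pot x α i0 v : ℝ≥0∞) ≤ ((pot x α i0 u + gadgetW x y α β u v : ℕ) : ℝ≥0∞) :=
        Nat.cast_le.mpr this
      rwa [Nat.cast_add] at h2
    · have := (pot_adj hβ h0 v u h1).2
      have h2 : (pot x α i0 v : ℝ≥0∞) ≤ ((pot x α i0 u + gadgetW x y α β v u : ℕ) : ℝ≥0∞) :=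
        Nat.cast_le.mpr this
      rw [Nat.cast_add] at h2
      rwa [GW_symm]
  have walk : ∀ (u v : GV h s ℓ) (p : (gadget h s ℓ).Walk u v),
      (pot x α i0 v : ℝ≥0∞) ≤ (pot x α i0 u : ℝ≥0∞) + wlen (gadget h s ℓ) (GW x y α β) p := by
    intro u v p
    induction p with
    | nil => simp
    | @cons u' m v' ha q ih =>
        rw [wlen_cons]
        calc (pot x α i0 v' : ℝ≥0∞) ≤ (pot x α i0 m : ℝ≥0∞) + wlen _ _ q := ih
          _ ≤ ((pot x α i0 u' : ℝ≥0∞) + GW x y α β u' m) + wlen _ _ q :=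
              add_le_add_left (lip u' m ha) _
          _ = (pot x α i0 u' : ℝ≥0∞) + (GW x y α β u' m + wlen _ _ q) := add_assoc _ _ _
  refine le_iInf fun p => ?_
  have hw := walk _ _ p
  have ha : pot x α i0 (GV.a i0 : GV h s ℓ) = 0 := by simp [pot]
  have hb : pot x α i0 (GV.b i0 : GV h s ℓ) = 3 * α := by simp [pot]
  rw [ha, hb] at hw
  simpa using hw

end Lower

lemma GV_card_lower (h s ℓ : ℕ) :
    2 ^ (h + 1) - 1 + (2 * s + ℓ) * 2 ^ h ≤ Fintype.card (GV h s ℓ) := by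
  classical
  have hinj : Function.Injective
      (fun q : Fin (2 ^ (h + 1) - 1) ⊕ (Fin (2 * s + ℓ) × Fin (2 ^ h)) =>
        (Sum.elim GV.t (fun z => GV.p z.1 z.2) q : GV h s ℓ)) := by
    rintro (m | ⟨r, j⟩) (m' | ⟨r', j'⟩) hq <;> simp_all
  have := Fintype.card_le_of_injective _ hinj
  simpa using this

/-- For the diameter gadget `(G,w)` with `α = n²`, `β = 2n²`
(`n = |V|`), and any real `ε ∈ (0,1/2]` with `n ≥ 2/ε`: every `D̃` with
`D_{G,w} ≤ D̃ ≤ (3/2−ε)·D_{G,w}` satisfies `D̃ < 3n²` if `F(x,y)=1` and `D̃ ≥ 3n²` if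
`F(x,y)=0`; in particular such a `D̃` determines the value of `F(x,y)`. -/
theorem stmt13 (h s ℓ : ℕ) (hh : 1 ≤ h) (hs : 1 ≤ s) (hℓ : 1 ≤ ℓ)
    (n : ℕ) (hn : n = Fintype.card (GV h s ℓ))
    (α β : ℕ) (hα : α = n ^ 2) (hβ : β = 2 * n ^ 2)
    (x y : Fin (2 ^ s) → Fin ℓ → Bool)
    (ε : ℝ) (hε0 : 0 < ε) (hε1 : ε ≤ 1 / 2) (hnε : 2 / ε ≤ (n : ℝ))
    (Dt : ℝ≥0∞)
    (hDt1 : wdiam (gadget h s ℓ) (fun u v => ((gadgetW x y α β u v : ℕ) : ℝ≥0∞)) ≤ Dt)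
    (hDt2 : Dt ≤ ENNReal.ofReal (3 / 2 - ε) *
      wdiam (gadget h s ℓ) (fun u v => ((gadgetW x y α β u v : ℕ) : ℝ≥0∞))) :
    ((∀ i : Fin (2 ^ s), ∃ j : Fin ℓ, x i j = true ∧ y i j = true) →
      Dt < ((3 * n ^ 2 : ℕ) : ℝ≥0∞)) ∧
    ((¬ ∀ i : Fin (2 ^ s), ∃ j : Fin ℓ, x i j = true ∧ y i j = true) →
      ((3 * n ^ 2 : ℕ) : ℝ≥0∞) ≤ Dt) := by
  -- numeric facts about `n`
  have e1 : 2 ^ (h + 1) = 2 * 2 ^ h := by rw [pow_succ]; ring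
  have e3 : 2 ^ (h + 3) = 8 * 2 ^ h := by rw [pow_add]; ring
  have hL2 : 2 ≤ 2 ^ h := by
    calc 2 = 2 ^ 1 := rfl
    _ ≤ 2 ^ h := Nat.pow_le_pow_right (by norm_num) hh
  have hcard := GV_card_lower h s ℓ
  have hsl : 3 * 2 ^ h ≤ (2 * s + ℓ) * 2 ^ h := Nat.mul_le_mul_right _ (by omega)
  have hn9 : 9 ≤ n := by omega
  have hn8L : 2 ^ (h + 3) ≤ 2 * n := by omega
  have hβ' : β = α + α := by rw [hβ, hα]; ring
  have hβ2 : β = 2 * α := by rw [hβ, hα]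
  constructor
  · -- F(x,y) = 1 : small diameter
    intro hF
    have hdiam : wdiam (gadget h s ℓ) (fun u v => ((gadgetW x y α β u v : ℕ) : ℝ≥0∞)) ≤
        ((2 * n ^ 2 + 2 * n : ℕ) : ℝ≥0∞) := by
      refine iSup_le fun u => iSup_le fun v => ?_
      exact wdist_mono (gdiam_pair hs hβ' hF u v) (by omega)
    have hεR : (0 : ℝ) ≤ 3 / 2 - ε := by linarith
    have hεn : 2 ≤ ε * (n : ℝ) := by
      have := (div_le_iff₀ hε0).mp hnε
      linarith
    have hnR : (9 : ℝ) ≤ (n : ℝ) := by exact_mod_cast hn9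
    have key : ENNReal.ofReal (3 / 2 - ε) * ((2 * n ^ 2 + 2 * n : ℕ) : ℝ≥0∞) <
        ((3 * n ^ 2 : ℕ) : ℝ≥0∞) := by
      rw [← ENNReal.ofReal_natCast (2 * n ^ 2 + 2 * n), ← ENNReal.ofReal_natCast (3 * n ^ 2),
        ← ENNReal.ofReal_mul hεR]
      rw [ENNReal.ofReal_lt_ofReal_iff (by push_cast; nlinarith)]
      push_cast
      nlinarith [mul_le_mul_of_nonneg_right hεn (show (0 : ℝ) ≤ (n : ℝ) by linarith)]
    calc Dt ≤ ENNReal.ofReal (3 / 2 - ε) *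
          wdiam (gadget h s ℓ) (fun u v => ((gadgetW x y α β u v : ℕ) : ℝ≥0∞)) := hDt2
      _ ≤ ENNReal.ofReal (3 / 2 - ε) * ((2 * n ^ 2 + 2 * n : ℕ) : ℝ≥0∞) :=
          mul_le_mul_right hdiam _
      _ < ((3 * n ^ 2 : ℕ) : ℝ≥0∞) := key
  · -- F(x,y) = 0 : large diameter
    intro hF
    push_neg at hF
    obtain ⟨i0, h0⟩ := hF
    have h0' : ∀ j, ¬(x i0 j = true ∧ y i0 j = true) := by
      intro j hj
      exact (h0 j hj.1) hj.2
    have hlow := pot_wdist (h := h) (x := x) (y := y) (α := α) (β := β) (i0 := i0) hβ2 h0'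
    have h3α : 3 * α = 3 * n ^ 2 := by rw [hα]
    calc ((3 * n ^ 2 : ℕ) : ℝ≥0∞) = ((3 * α : ℕ) : ℝ≥0∞) := by rw [h3α]
      _ ≤ wdist (gadget h s ℓ) (GW x y α β) (GV.a i0) (GV.b i0) := hlow
      _ ≤ wdiam (gadget h s ℓ) (fun u v => ((gadgetW x y α β u v : ℕ) : ℝ≥0∞)) :=
          le_iSup_of_le (GV.a i0) (le_iSup_of_le (GV.b i0) le_rfl)
      _ ≤ Dt := hDt1
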